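/- Let λ ∈ [0,1), α > 0, and let (X_t) be the stationary ARMAX(λ) process with Fréchet(α) marginals, X_t = max{λX_{t-1}, (1-λ^α)^{1/α} Z_t} with i.i.d. Fréchet(α) innovations Z_t. Then for every κ > 0 and sequence a_n with n·P(X_0 > a_n) → κ, we have P(max_{t=1..n} X_t ≤ a_n) → exp(-κ(1-λ^α)) as n → ∞; i.e., the extremal index of (X_t) equals 1 - λ^α. -/

import Mathlib

open MeasureTheory ProbabilityTheory Real Filter Topology ENNReal

lemma armax_decomp (lam c x : ℝ) (hlam : 0 ≤ lam) (hlam1 : lam ≤ 1) (hx : 0 < x)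
    (X Z : ℤ → ℝ) (n : ℕ) (hn : 1 ≤ n)
    (hrec : ∀ t ∈ Finset.Icc (1:ℤ) (n:ℤ), X t = max (lam * X (t-1)) (c * Z t)) :
    (∀ t ∈ Finset.Icc (1:ℤ) (n:ℤ), X t ≤ x) ↔
      (lam * X 0 ≤ x ∧ ∀ t ∈ Finset.Icc (1:ℤ) (n:ℤ), c * Z t ≤ x) := by
  have h1mem : (1:ℤ) ∈ Finset.Icc (1:ℤ) (n:ℤ) := by
    simp [Finset.mem_Icc]; exact_mod_cast hn
  constructor
  · intro h
    have h1 := h 1 h1mem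
    rw [hrec 1 h1mem] at h1
    simp only [max_le_iff] at h1
    refine ⟨by simpa using h1.1, fun t ht => ?_⟩
    have := h t ht
    rw [hrec t ht] at this
    exact (max_le_iff.mp this).2
  · rintro ⟨h0, hz⟩
    have key : ∀ k : ℕ, ∀ t : ℤ, t = 1 + k → t ∈ Finset.Icc (1:ℤ) (n:ℤ) → X t ≤ x := by
      intro k
      induction k with
      | zero =>
        intro t ht hmem
        norm_num at ht
        subst ht
        rw [hrec 1 hmem]
        simp only [max_le_iff]
        exact ⟨by simpa using h0, hz 1 hmem⟩
      | succ k ih =>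
        intro t ht hmem
        rw [hrec t hmem]
        have ht1 : t - 1 = 1 + (k:ℤ) := by omega
        have hmem1 : t - 1 ∈ Finset.Icc (1:ℤ) (n:ℤ) := by
          simp only [Finset.mem_Icc] at hmem ⊢
          omega
        have hX1 : X (t-1) ≤ x := ih (t-1) ht1 hmem1
        refine max_le ?_ (hz t hmem)
        nlinarith
    intro t ht
    have h1t : (1:ℤ) ≤ t := (Finset.mem_Icc.mp ht).1
    obtain ⟨k, hk⟩ := Int.le.dest h1t
    exact key k t hk.symm ht

lemma armax_rate {α κ : ℝ} (a p : ℕ → ℝ)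
    (hpa : ∀ n, 0 < a n → p n = 1 - Real.exp (-(a n ^ (-α))))
    (hbig : ∀ n, a n ≤ 0 → 1 ≤ p n)
    (ha : Tendsto (fun n : ℕ => (n : ℝ) * p n) atTop (nhds κ)) :
    (∀ᶠ n in atTop, 0 < a n) ∧
      Tendsto (fun n : ℕ => (n : ℝ) * a n ^ (-α)) atTop (nhds κ) ∧
      Tendsto p atTop (nhds 0) := by
  have hp0 : Tendsto p atTop (nhds 0) := by
    have h1 : Tendsto (fun n : ℕ => ((n:ℝ) * p n) * (1 / (n:ℝ))) atTop (nhds (κ * 0)) :=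
      ha.mul tendsto_one_div_atTop_nhds_zero_nat
    rw [mul_zero] at h1
    refine h1.congr' ?_
    filter_upwards [eventually_ge_atTop 1] with n hn
    have : (n:ℝ) ≠ 0 := by positivity
    field_simp
  have hapos : ∀ᶠ n in atTop, 0 < a n := by
    filter_upwards [hp0.eventually (gt_mem_nhds (by norm_num : (0:ℝ) < 1))] with n hn
    by_contra h
    push_neg at h
    have := hbig n h
    linarith
  set u : ℕ → ℝ := fun n => a n ^ (-α) with hu_def
  have hupos : ∀ᶠ n in atTop, 0 < u n := by
    filter_upwards [hapos] with n hn
    exact Real.rpow_pos_of_pos hn _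
  have hppos : ∀ᶠ n in atTop, 0 < p n := by
    filter_upwards [hapos, hupos] with n hn hun
    rw [hpa n hn]
    have : Real.exp (-(u n)) < 1 := by
      rw [Real.exp_lt_one_iff]; linarith
    linarith
  have hu0 : Tendsto u atTop (nhds 0) := by
    have hl : Tendsto (fun n => -Real.log (1 - p n)) atTop (nhds 0) := by
      have h1 : Tendsto (fun n => 1 - p n) atTop (nhds 1) := by
        simpa using (tendsto_const_nhds.sub hp0 : Tendsto (fun n => (1:ℝ) - p n) atTop (nhds (1 - 0)))
      have h2 := ((Real.continuousAt_log one_ne_zero).tendsto.comp h1).neg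
      simpa using h2
    refine hl.congr' ?_
    filter_upwards [hapos] with n hn
    rw [hpa n hn]
    simp [Real.log_exp, hu_def]
  have hslope : Tendsto (fun n => p n / u n) atTop (nhds 1) := by
    have hd := hasDerivAt_iff_tendsto_slope.mp (Real.hasDerivAt_exp 0)
    rw [Real.exp_zero] at hd
    have hv : Tendsto (fun n => -(u n)) atTop (𝓝[≠] (0:ℝ)) := by
      refine tendsto_nhdsWithin_of_tendsto_nhds_of_eventually_within _ (by simpa using hu0.neg) ?_
      filter_upwards [hupos] with n hn
      simp only [Set.mem_compl_iff, Set.mem_singleton_iff]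
      intro h; rw [neg_eq_zero] at h; linarith
    have hc := hd.comp hv
    refine hc.congr' ?_
    filter_upwards [hapos, hupos] with n hn hun
    simp only [Function.comp_apply, slope_def_field]
    rw [hpa n hn]
    field_simp [hun.ne']
    simp only [hu_def, Real.exp_zero]
    ring
  have hinv : Tendsto (fun n => u n / p n) atTop (nhds 1) := by
    have := (hslope.inv₀ one_ne_zero)
    simp only [inv_one] at this
    refine this.congr' ?_
    filter_upwards [hupos, hppos] with n hun hpn
    rw [inv_div]
  refine ⟨hapos, ?_, hp0⟩
  have hmul : Tendsto (fun n : ℕ => ((n:ℝ) * p n) * (u n / p n)) atTop (nhds (κ * 1)) :=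
    ha.mul hinv
  rw [mul_one] at hmul
  refine hmul.congr' ?_
  filter_upwards [hppos] with n hpn
  field_simp
  ring

/-- The extremal index of the stationary ARMAX(λ) process with Fréchet(α)
marginals equals `1 - λ^α`: whenever `n·P(X_0 > a_n) → κ`,
`P(max_{t=1..n} X_t ≤ a_n) → exp(-κ(1-λ^α))`. -/
theorem armax_extremal_index {Ω : Type*} [MeasurableSpace Ω]
    (μ : Measure Ω) [IsProbabilityMeasure μ] (lam α : ℝ)
    (hlam : 0 ≤ lam) (hlam1 : lam < 1) (hα : 0 < α)
    (Z : ℤ → Ω → ℝ) (hZm : ∀ t, Measurable (Z t))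
    (hZindep : iIndepFun Z μ)
    (hZid : ∀ t : ℤ, ∀ x : ℝ, 0 < x →
      μ {ω | Z t ω ≤ x} = ENNReal.ofReal (Real.exp (-x ^ (-α))))
    (X : ℤ → Ω → ℝ) (hXm : ∀ t, Measurable (X t))
    (hXrec : ∀ t : ℤ, ∀ᵐ ω ∂μ,
      X t ω = max (lam * X (t - 1) ω) ((1 - lam ^ α) ^ (1 / α) * Z t ω))
    (hXmarg : ∀ t : ℤ, ∀ x : ℝ, 0 < x →
      μ {ω | X t ω ≤ x} = ENNReal.ofReal (Real.exp (-x ^ (-α))))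
    (κ : ℝ) (hκ : 0 < κ) (a : ℕ → ℝ)
    (ha : Tendsto (fun n : ℕ => (n : ℝ) * (μ {ω | a n < X 0 ω}).toReal)
      atTop (nhds κ)) :
    Tendsto (fun n : ℕ =>
        (μ {ω | ∀ t ∈ Finset.Icc (1 : ℤ) (n : ℤ), X t ω ≤ a n}).toReal)
      atTop (nhds (Real.exp (-κ * (1 - lam ^ α)))) := by
  set c : ℝ := (1 - lam ^ α) ^ (1 / α) with hc_def
  have hl1 : lam ^ α < 1 := by
    rcases eq_or_lt_of_le hlam with h | h
    · rw [← h, Real.zero_rpow hα.ne']; norm_num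
    · exact Real.rpow_lt_one hlam hlam1 hα
  have h1l : 0 < 1 - lam ^ α := by linarith
  have hc : 0 < c := Real.rpow_pos_of_pos h1l _
  have hcα : c ^ α = 1 - lam ^ α := by
    rw [hc_def, ← Real.rpow_mul h1l.le, one_div_mul_cancel hα.ne', Real.rpow_one]
  -- measure of the innovations intersection
  have hC : ∀ (n : ℕ) (x : ℝ), 0 < x →
      μ (⋂ t ∈ Finset.Icc (1:ℤ) (n:ℤ), {ω | c * Z t ω ≤ x})
        = ENNReal.ofReal (Real.exp (-(((n:ℝ) * x ^ (-α)) * (1 - lam ^ α)))) := by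
    intro n x hx
    have hset : ∀ t : ℤ, {ω | c * Z t ω ≤ x} = Z t ⁻¹' (Set.Iic (x / c)) := by
      intro t; ext ω
      simp only [Set.mem_setOf_eq, Set.mem_preimage, Set.mem_Iic]
      rw [le_div_iff₀' hc]
    have hmeas : ∀ t ∈ Finset.Icc (1:ℤ) (n:ℤ),
        MeasurableSet[MeasurableSpace.comap (Z t) inferInstance] {ω | c * Z t ω ≤ x} := by
      intro t _
      exact ⟨Set.Iic (x / c), measurableSet_Iic, (hset t).symm⟩
    rw [hZindep.meas_biInter hmeas]
    have hxc : 0 < x / c := div_pos hx hc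
    have hone : ∀ t : ℤ, μ {ω | c * Z t ω ≤ x} = ENNReal.ofReal (Real.exp (-(x/c) ^ (-α))) := by
      intro t
      rw [hset t]
      exact hZid t (x/c) hxc
    rw [Finset.prod_congr rfl (fun t _ => hone t), Finset.prod_const]
    have hcard : (Finset.Icc (1:ℤ) (n:ℤ)).card = n := by
      rw [Int.card_Icc]; omega
    rw [hcard, ← ENNReal.ofReal_pow (Real.exp_nonneg _), ← Real.exp_nat_mul]
    congr 1
    have hexp : (x/c) ^ (-α) = x ^ (-α) * (1 - lam ^ α) := by
      rw [div_eq_mul_inv, Real.mul_rpow hx.le (inv_nonneg.mpr hc.le),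
        Real.inv_rpow hc.le, Real.rpow_neg hc.le, inv_inv, hcα]
    rw [hexp]; ring
  -- μ {X₀ ≤ 0} = 0
  have hX0zero : μ {ω | X 0 ω ≤ 0} = 0 := by
    have key : ∀ k : ℕ, μ {ω | X 0 ω ≤ 0} ≤ ENNReal.ofReal (Real.exp (-((k:ℝ)+1))) := by
      intro k
      set x : ℝ := ((k:ℝ)+1) ^ (-(1/α)) with hx_def
      have hk1 : (0:ℝ) < (k:ℝ)+1 := by positivity
      have hxpos : 0 < x := Real.rpow_pos_of_pos hk1 _
      have hxα : x ^ (-α) = (k:ℝ)+1 := by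
        rw [hx_def, ← Real.rpow_mul hk1.le]
        have : -(1/α) * -α = 1 := by field_simp
        rw [this, Real.rpow_one]
      have hsub : {ω | X 0 ω ≤ 0} ⊆ {ω | X 0 ω ≤ x} := fun ω hω => le_trans hω hxpos.le
      calc μ {ω | X 0 ω ≤ 0} ≤ μ {ω | X 0 ω ≤ x} := measure_mono hsub
        _ = ENNReal.ofReal (Real.exp (-x ^ (-α))) := hXmarg 0 x hxpos
        _ = ENNReal.ofReal (Real.exp (-((k:ℝ)+1))) := by rw [hxα]
    have hlim : Tendsto (fun k : ℕ => ENNReal.ofReal (Real.exp (-((k:ℝ)+1)))) atTop (nhds 0) := by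
      have h1 : Tendsto (fun k : ℕ => Real.exp (-((k:ℝ)+1))) atTop (nhds 0) := by
        apply Real.tendsto_exp_atBot.comp
        exact tendsto_neg_atTop_atBot.comp (tendsto_atTop_add_const_right _ 1 tendsto_natCast_atTop_atTop)
      simpa using ENNReal.tendsto_ofReal h1
    have := ge_of_tendsto' hlim key
    simpa using le_antisymm this zero_le
  set p : ℕ → ℝ := fun n => (μ {ω | a n < X 0 ω}).toReal with hp_def
  have hmX0 : ∀ y : ℝ, MeasurableSet {ω | X 0 ω ≤ y} := fun y =>
    measurableSet_le (hXm 0) measurable_const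
  have hcompl : ∀ y : ℝ, {ω | y < X 0 ω} = {ω | X 0 ω ≤ y}ᶜ := by
    intro y; ext ω; simp [not_le]
  have hpa : ∀ n, 0 < a n → p n = 1 - Real.exp (-(a n ^ (-α))) := by
    intro n hn
    have he1 : Real.exp (-(a n ^ (-α))) ≤ 1 := by
      rw [Real.exp_le_one_iff]
      have : 0 < a n ^ (-α) := Real.rpow_pos_of_pos hn _
      linarith
    rw [hp_def]
    simp only
    rw [hcompl (a n), measure_compl (hmX0 (a n)) (measure_ne_top μ _), measure_univ,
      hXmarg 0 (a n) hn, ← ENNReal.ofReal_one,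
      ← ENNReal.ofReal_sub _ (Real.exp_nonneg _), ENNReal.toReal_ofReal (by linarith)]
  have hbig : ∀ n, a n ≤ 0 → 1 ≤ p n := by
    intro n hn
    have hsub : {ω | X 0 ω ≤ 0}ᶜ ⊆ {ω | a n < X 0 ω} := by
      intro ω hω
      simp only [Set.mem_compl_iff, Set.mem_setOf_eq, not_le] at hω ⊢
      linarith
    have h1 : μ {ω | X 0 ω ≤ 0}ᶜ = 1 := by
      rw [measure_compl (hmX0 0) (measure_ne_top μ _), measure_univ, hX0zero]
      simp
    have h2 : (1:ℝ≥0∞) ≤ μ {ω | a n < X 0 ω} := h1 ▸ measure_mono hsub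
    have h3 := ENNReal.toReal_mono (measure_ne_top μ _) h2
    simpa using h3
  obtain ⟨hapos, hnu, hp0⟩ := armax_rate a p hpa hbig ha
  -- limit function
  set g : ℕ → ℝ := fun n => Real.exp (-(((n:ℝ) * a n ^ (-α)) * (1 - lam ^ α))) with hg_def
  have hg : Tendsto g atTop (nhds (Real.exp (-(κ * (1 - lam ^ α))))) :=
    (Real.continuous_exp.tendsto _).comp ((hnu.mul_const (1 - lam ^ α)).neg)
  rw [neg_mul]
  -- a.e. recursion
  have hae : ∀ᵐ ω ∂μ, ∀ t : ℤ, X t ω = max (lam * X (t-1) ω) (c * Z t ω) :=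
    ae_all_iff.mpr hXrec
  -- squeeze
  have hgsub : Tendsto (fun n => g n - p n) atTop (nhds (Real.exp (-(κ * (1 - lam ^ α))))) := by
    simpa using hg.sub hp0
  refine tendsto_of_tendsto_of_tendsto_of_le_of_le' hgsub hg ?_ ?_
  · -- lower bound : g n - p n ≤ m n
    filter_upwards [hapos, eventually_ge_atTop 1] with n hn hn1
    set Cn := ⋂ t ∈ Finset.Icc (1:ℤ) (n:ℤ), {ω | c * Z t ω ≤ a n} with hCn_def
    set An := {ω | lam * X 0 ω ≤ a n} with hAn_def
    have hEeq : μ {ω | ∀ t ∈ Finset.Icc (1 : ℤ) (n : ℤ), X t ω ≤ a n} = μ (An ∩ Cn) := by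
      apply measure_congr
      rw [Filter.eventuallyEq_set]
      filter_upwards [hae] with ω hω
      have := armax_decomp lam c (a n) hlam hlam1.le hn (fun t => X t ω) (fun t => Z t ω)
        n hn1 (fun t _ => hω t)
      simp only [Set.mem_setOf_eq, Set.mem_inter_iff, Set.mem_iInter, hAn_def, hCn_def]
      exact this
    have hDsub : {ω | a n < lam * X 0 ω} ⊆ {ω | a n < X 0 ω} := by
      intro ω hω
      simp only [Set.mem_setOf_eq] at hω ⊢
      rcases le_or_gt (X 0 ω) 0 with h | h
      · exfalso
        have : lam * X 0 ω ≤ 0 := mul_nonpos_of_nonneg_of_nonpos hlam h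
        linarith
      · calc a n < lam * X 0 ω := hω
          _ ≤ 1 * X 0 ω := mul_le_mul_of_nonneg_right hlam1.le h.le
          _ = X 0 ω := one_mul _
    have hCsub : Cn ⊆ (An ∩ Cn) ∪ {ω | a n < lam * X 0 ω} := by
      intro ω hω
      by_cases h : lam * X 0 ω ≤ a n
      · exact Or.inl ⟨h, hω⟩
      · exact Or.inr (by simpa using not_le.mp h)
    have hCle : μ Cn ≤ μ (An ∩ Cn) + μ {ω | a n < X 0 ω} := by
      calc μ Cn ≤ μ ((An ∩ Cn) ∪ {ω | a n < lam * X 0 ω}) := measure_mono hCsub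
        _ ≤ μ (An ∩ Cn) + μ {ω | a n < lam * X 0 ω} := measure_union_le _ _
        _ ≤ μ (An ∩ Cn) + μ {ω | a n < X 0 ω} := by
            exact add_le_add_right (measure_mono hDsub) _
    have hCval : μ Cn = ENNReal.ofReal (g n) := hC n (a n) hn
    have htr := ENNReal.toReal_mono (by finiteness) hCle
    rw [hCval, ENNReal.toReal_add (measure_ne_top μ _) (measure_ne_top μ _),
      ENNReal.toReal_ofReal (Real.exp_nonneg _)] at htr
    rw [hEeq]
    linarith [htr]
  · -- upper bound : m n ≤ g n
    filter_upwards [hapos, eventually_ge_atTop 1] with n hn hn1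
    set Cn := ⋂ t ∈ Finset.Icc (1:ℤ) (n:ℤ), {ω | c * Z t ω ≤ a n} with hCn_def
    set An := {ω | lam * X 0 ω ≤ a n} with hAn_def
    have hEeq : μ {ω | ∀ t ∈ Finset.Icc (1 : ℤ) (n : ℤ), X t ω ≤ a n} = μ (An ∩ Cn) := by
      apply measure_congr
      rw [Filter.eventuallyEq_set]
      filter_upwards [hae] with ω hω
      have := armax_decomp lam c (a n) hlam hlam1.le hn (fun t => X t ω) (fun t => Z t ω)
        n hn1 (fun t _ => hω t)
      simp only [Set.mem_setOf_eq, Set.mem_inter_iff, Set.mem_iInter, hAn_def, hCn_def]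
      exact this
    have hCval : μ Cn = ENNReal.ofReal (g n) := hC n (a n) hn
    have hle : μ (An ∩ Cn) ≤ μ Cn := measure_mono Set.inter_subset_right
    have := ENNReal.toReal_mono (by rw [hCval]; exact ENNReal.ofReal_ne_top) hle
    rw [hCval, ENNReal.toReal_ofReal (Real.exp_nonneg _)] at this
    rw [hEeq]
    exact this
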